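/- The indicator function of the rationals, f(x)=1 if x∈ℚ and f(x)=0 otherwise, has, at x=0, all odd-order symmetric Riemann derivatives existing (equal to 0), but no even-order symmetric Riemann derivative exists. -/

import Mathlib

open Filter Finset

open scoped Classical in
private lemma sum_choose_zero (n : ℕ) (hn : n ≠ 0) :
    ∑ k ∈ Finset.range (n + 1), (-1 : ℝ) ^ k * (n.choose k : ℝ) = 0 := by
  have h := Int.alternating_sum_range_choose (n := n)
  rw [if_neg hn] at h
  have : ((∑ m ∈ Finset.range (n+1), (-1:ℤ)^m * (n.choose m : ℤ) : ℤ) : ℝ)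
      = ∑ k ∈ Finset.range (n + 1), (-1 : ℝ) ^ k * (n.choose k : ℝ) := by
    push_cast; ring
  rw [h] at this
  simpa using this.symm

open scoped Classical in
private lemma sum_rat (f : ℝ → ℝ)
    (hf : ∀ x : ℝ, f x = if ∃ q : ℚ, (q : ℝ) = x then 1 else 0)
    (n : ℕ) (hn : n ≠ 0) (q : ℚ) :
    ∑ k ∈ Finset.range (n + 1),
      (-1 : ℝ) ^ k * (n.choose k : ℝ) * f (((n : ℝ) / 2 - (k : ℝ)) * (q : ℝ)) = 0 := by
  have h1 : ∀ k ∈ Finset.range (n+1),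
      (-1 : ℝ) ^ k * (n.choose k : ℝ) * f (((n : ℝ) / 2 - (k : ℝ)) * q)
        = (-1:ℝ)^k * (n.choose k : ℝ) := by
    intro k _
    have : f (((n : ℝ) / 2 - (k : ℝ)) * q) = 1 := by
      rw [hf, if_pos]
      exact ⟨((n:ℚ)/2 - k) * q, by push_cast; ring⟩
    rw [this, mul_one]
  rw [Finset.sum_congr rfl h1, sum_choose_zero n hn]

open scoped Classical in
private lemma f_irr (f : ℝ → ℝ)
    (hf : ∀ x : ℝ, f x = if ∃ q : ℚ, (q : ℝ) = x then 1 else 0)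
    {x : ℝ} (hx : Irrational x) : f x = 0 := by
  rw [hf, if_neg]
  rintro ⟨q, hq⟩
  exact hx ⟨q, hq⟩

open scoped Classical in
theorem stmt_3 (f : ℝ → ℝ)
    (hf : ∀ x : ℝ, f x = if ∃ q : ℚ, (q : ℝ) = x then 1 else 0) :
    (∀ n : ℕ, Odd n →
      Tendsto (fun h : ℝ =>
          (1 / h ^ n) * ∑ k ∈ Finset.range (n + 1),
            (-1 : ℝ) ^ k * (n.choose k : ℝ) * f (((n : ℝ) / 2 - (k : ℝ)) * h))
        (nhdsWithin 0 {0}ᶜ) (nhds 0))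
    ∧ (∀ n : ℕ, Even n → n ≠ 0 →
      ¬ ∃ L : ℝ, Tendsto (fun h : ℝ =>
          (1 / h ^ n) * ∑ k ∈ Finset.range (n + 1),
            (-1 : ℝ) ^ k * (n.choose k : ℝ) * f (((n : ℝ) / 2 - (k : ℝ)) * h))
        (nhdsWithin 0 {0}ᶜ) (nhds L)) := by
  constructor
  · -- odd case: the sum is identically 0
    intro n hn
    have hn0 : n ≠ 0 := by rintro rfl; exact (Nat.not_odd_zero) hn
    have key : ∀ h : ℝ, ∑ k ∈ Finset.range (n + 1),
        (-1 : ℝ) ^ k * (n.choose k : ℝ) * f (((n : ℝ) / 2 - (k : ℝ)) * h) = 0 := by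
      intro h
      by_cases hq : ∃ q : ℚ, (q : ℝ) = h
      · obtain ⟨q, rfl⟩ := hq
        exact sum_rat f hf n hn0 q
      · -- h irrational; all coefficients n/2 - k are nonzero rationals
        have hirr : Irrational h := hq
        apply Finset.sum_eq_zero
        intro k _
        have hne : ((n:ℚ)/2 - k) ≠ 0 := by
          intro h0
          have : (n : ℚ) = 2 * k := by linarith [h0]
          have : n = 2 * k := by exact_mod_cast this
          exact (Nat.not_even_iff_odd.mpr hn) ⟨k, by omega⟩
        have : Irrational ((((n:ℚ)/2 - k : ℚ) : ℝ) * h) := hirr.ratCast_mul hne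
        have hfz : f (((n : ℝ) / 2 - (k : ℝ)) * h) = 0 := by
          have hcast : (((n:ℚ)/2 - k : ℚ) : ℝ) = (n : ℝ) / 2 - (k : ℝ) := by push_cast; ring
          rw [← hcast]
          exact f_irr f hf this
        rw [hfz, mul_zero]
    have : (fun h : ℝ => (1 / h ^ n) * ∑ k ∈ Finset.range (n + 1),
        (-1 : ℝ) ^ k * (n.choose k : ℝ) * f (((n : ℝ) / 2 - (k : ℝ)) * h)) = fun _ => (0:ℝ) := by
      funext h; rw [key h, mul_zero]
    rw [this]
    exact tendsto_const_nhds
  · -- even case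
    intro n hn hn0
    rintro ⟨L, hL⟩
    set c : ℝ := (-1 : ℝ) ^ (n/2) * (n.choose (n/2) : ℝ) with hc
    have hcne : c ≠ 0 := by
      have : (0:ℝ) < (n.choose (n/2) : ℝ) := by
        exact_mod_cast Nat.choose_pos (Nat.div_le_self n 2)
      intro h0
      rcases mul_eq_zero.mp h0 with h | h
      · exact (pow_ne_zero _ (by norm_num : (-1:ℝ) ≠ 0)) h
      · linarith
    set g : ℝ → ℝ := fun h : ℝ => (1 / h ^ n) * ∑ k ∈ Finset.range (n + 1),
        (-1 : ℝ) ^ k * (n.choose k : ℝ) * f (((n : ℝ) / 2 - (k : ℝ)) * h) with hg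
    -- irrational h: sum = c
    have key_irr : ∀ h : ℝ, Irrational h → g h = (1 / h ^ n) * c := by
      intro h hirr
      have : ∑ k ∈ Finset.range (n + 1),
          (-1 : ℝ) ^ k * (n.choose k : ℝ) * f (((n : ℝ) / 2 - (k : ℝ)) * h) = c := by
        rw [Finset.sum_eq_single (n/2)]
        · have harg : ((n : ℝ) / 2 - ((n/2 : ℕ) : ℝ)) = 0 := by
            obtain ⟨m, rfl⟩ := hn
            have : (m + m) / 2 = m := by omega
            rw [this]; push_cast; ring
          rw [harg, zero_mul]
          have : f 0 = 1 := by rw [hf, if_pos ⟨0, by norm_num⟩]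
          rw [this, mul_one, hc]
        · intro k hk hkne
          have hne : ((n:ℚ)/2 - k) ≠ 0 := by
            intro h0
            have : (n : ℚ) = 2 * k := by linarith [h0]
            have hnk : n = 2 * k := by exact_mod_cast this
            exact hkne (by omega)
          have hirr2 : Irrational ((((n:ℚ)/2 - k : ℚ) : ℝ) * h) := hirr.ratCast_mul hne
          have hcast : (((n:ℚ)/2 - k : ℚ) : ℝ) = (n : ℝ) / 2 - (k : ℝ) := by push_cast; ring
          rw [← hcast, f_irr f hf hirr2, mul_zero]
        · intro hmem
          exact absurd (Finset.mem_range.mpr (by omega : n/2 < n+1)) hmem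
      rw [hg]; simp only [this]
    -- L = 0 via rational sequence
    have hu : Tendsto (fun m : ℕ => (1 : ℝ) / (m + 1)) atTop (nhdsWithin 0 {0}ᶜ) := by
      apply tendsto_nhdsWithin_of_tendsto_nhds_of_eventually_within
      · exact tendsto_one_div_add_atTop_nhds_zero_nat
      · filter_upwards with m
        simp only [Set.mem_compl_iff, Set.mem_singleton_iff]
        positivity
    have hgu : ∀ m : ℕ, g ((1:ℝ)/(m+1)) = 0 := by
      intro m
      have : ((((1 : ℚ)/(m+1)) : ℚ) : ℝ) = (1:ℝ)/(m+1) := by push_cast; ring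
      rw [hg]
      simp only
      rw [← this, sum_rat f hf n hn0, mul_zero]
    have hL0 : L = 0 := by
      have h1 : Tendsto (fun m : ℕ => g ((1:ℝ)/(m+1))) atTop (nhds L) := hL.comp hu
      have h2 : Tendsto (fun m : ℕ => g ((1:ℝ)/(m+1))) atTop (nhds 0) := by
        simp only [hgu]; exact tendsto_const_nhds
      exact tendsto_nhds_unique h1 h2
    -- irrational sequence
    set v : ℕ → ℝ := fun m => Real.sqrt 2 / (m + 1) with hv
    have hvirr : ∀ m : ℕ, Irrational (v m) := by
      intro m
      have := irrational_sqrt_two.div_natCast (m := m + 1) (by omega)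
      have hcast : ((m+1 : ℕ) : ℝ) = (m:ℝ) + 1 := by push_cast; ring
      rwa [hcast] at this
    have hs2pos : (0:ℝ) < Real.sqrt 2 := Real.sqrt_pos.mpr (by norm_num)
    have hvpos : ∀ m : ℕ, 0 < v m := by
      intro m; rw [hv]; positivity
    have hvt : Tendsto v atTop (nhdsWithin 0 {0}ᶜ) := by
      apply tendsto_nhdsWithin_of_tendsto_nhds_of_eventually_within
      · have : Tendsto (fun m : ℕ => Real.sqrt 2 * (1 / (m + 1))) atTop (nhds (Real.sqrt 2 * 0)) :=
          tendsto_const_nhds.mul tendsto_one_div_add_atTop_nhds_zero_nat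
        rw [mul_zero] at this
        refine this.congr fun m => by rw [hv]; ring
      · filter_upwards with m
        simp only [Set.mem_compl_iff, Set.mem_singleton_iff]
        exact (hvpos m).ne'
    have hgv : Tendsto (fun m : ℕ => g (v m)) atTop (nhds 0) := by
      rw [← hL0]; exact hL.comp hvt
    have hev : ∀ᶠ m : ℕ in atTop, |g (v m)| < |c| := by
      have habs : Tendsto (fun m : ℕ => |g (v m)|) atTop (nhds 0) := by
        simpa using hgv.abs
      exact habs.eventually_lt_const (abs_pos.mpr hcne)
    have hlow : ∀ m : ℕ, 1 ≤ m → |c| ≤ |g (v m)| := by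
      intro m hm
      have hvle : v m ≤ 1 := by
        have h2 : Real.sqrt 2 ≤ 2 := by
          nlinarith [Real.sq_sqrt (by norm_num : (0:ℝ) ≤ 2), Real.sqrt_nonneg 2]
        rw [hv]
        rw [div_le_one (by positivity)]
        have : (2:ℝ) ≤ (m:ℝ) + 1 := by
          have : (1:ℝ) ≤ (m:ℝ) := by exact_mod_cast hm
          linarith
        linarith
      have hpow : 0 < (v m) ^ n := pow_pos (hvpos m) n
      have hpowle : (v m) ^ n ≤ 1 := pow_le_one₀ (hvpos m).le hvle
      have hmulabs : |1 / v m ^ n * c| = 1 / v m ^ n * |c| := by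
        rw [abs_mul, abs_of_pos (show (0:ℝ) < 1 / v m ^ n by positivity)]
      rw [key_irr (v m) (hvirr m), hmulabs]
      have h1 : 1 ≤ 1 / v m ^ n := by
        rw [le_div_iff₀ hpow]; linarith
      nlinarith [abs_nonneg c, abs_pos.mpr hcne]
    obtain ⟨m, hm1, hm2⟩ := (hev.and (eventually_ge_atTop 1)).exists
    exact absurd (hlow m hm2) (not_le.mpr hm1)
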